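/- There is an involution-like bijection Ω_n from the set φ({NE,D}^n) = ∪_{γ∈{NE,D}^n} φ(γ) onto itself such that area(γ) = bounce(Ω_n(γ)) and bounce(γ) = area(Ω_n(γ)) for all γ in this set. -/

import Mathlib

open scoped Classical

inductive Step : Type
  | N | E | D
deriving DecidableEq, Repr

instance : Fintype Step :=
  ⟨{Step.N, Step.E, Step.D}, by intro x; cases x <;> simp⟩

open Step

/-- number of occurrences of the letter `s` in the word `w` -/
def cnt (s : Step) (w : List Step) : ℕ := w.count s

/-- Schröder (or Dyck, if no `D`s) path in an `n × n` grid: every prefix has at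
least as many `N`s as `E`s, and the totals agree. -/
def IsSchroeder (w : List Step) : Prop :=
  (∀ p : List Step, p <+: w → cnt E p ≤ cnt N p) ∧ cnt N w = cnt E w

/-- words that are concatenations of blocks `NE` and `D` -/
inductive IsNED : List Step → Prop
  | nil : IsNED []
  | ne {w} : IsNED w → IsNED (N :: E :: w)
  | d {w} : IsNED w → IsNED (D :: w)

/-- area of a Schröder path: the number of lower triangles between the path and the
main diagonal, computed as the sum over `N` and `D` steps of the height
`#N - #E` of the starting point of the step above the diagonal. -/
def areaAux : ℕ → List Step → ℕ
  | _, [] => 0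
  | h, N :: w => h + areaAux (h+1) w
  | h, D :: w => h + areaAux h w
  | h, E :: w => areaAux (h-1) w

def area (w : List Step) : ℕ := areaAux 0 w

/-- area of an `N/E` lattice path in a rectangular grid: the number of boxes under
the path, i.e. the sum over `E` steps of the number of `N` steps before it. -/
def areaNEAux : ℕ → List Step → ℕ
  | _, [] => 0
  | h, N :: w => areaNEAux (h+1) w
  | h, E :: w => h + areaNEAux h w
  | h, D :: w => areaNEAux h w

def areaNE (w : List Step) : ℕ := areaNEAux 0 w

/-- number of `N`s occurring before the `(j+1)`-st `E` (`j` is 0-indexed);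
this is the height of the path above the horizontal interval `[j, j+1]`. -/
def nBefore : List Step → ℕ → ℕ
  | [], _ => 0
  | N :: w, j => 1 + nBefore w j
  | E :: w, j => if j = 0 then 0 else nBefore w (j-1)
  | D :: w, j => nBefore w j

/-- number of `E`s occurring before the `(i+1)`-st `N` (`i` is 0-indexed). -/
def eBefore : List Step → ℕ → ℕ
  | [], _ => 0
  | E :: w, i => 1 + eBefore w i
  | N :: w, i => if i = 0 then 0 else eBefore w (i-1)
  | D :: w, i => eBefore w i

/-- number of `D`s occurring after the `e`-th `E` (`e` is 1-indexed). -/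
def dAfterE : List Step → ℕ → ℕ
  | [], _ => 0
  | E :: w, e => if e ≤ 1 then cnt D w else dAfterE w (e-1)
  | D :: w, e => dAfterE w e
  | N :: w, e => dAfterE w e

/-- Combined computation of `bounce(Γ(γ)) + numph(γ)` along the bounce path of
`Γ(γ)`.  Here `g` is the Schröder path, `w = Γ(g)` is the underlying Dyck path,
`nn` its size; the bounce path has corners (peaks) at the positions
`j₀ = 0, jₖ₊₁ = nBefore w jₖ`; each intermediate return `jₖ₊₁ < nn` contributes
`nn - jₖ₊₁` to the bounce of `Γ(g)`, and the peak with corner at `jₖ` is the start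
of the `(jₖ+1)`-st east step, contributing to numph the number of diagonal steps of
`g` above it, i.e. after that east step. -/
def bounceAux (g w : List Step) (nn : ℕ) : ℕ → ℕ → ℕ
  | 0, _ => 0
  | fuel+1, j =>
      dAfterE g (j+1) +
        (if nn ≤ nBefore w j ∨ nBefore w j ≤ j then 0
         else (nn - nBefore w j) + bounceAux g w nn fuel (nBefore w j))

/-- the bounce statistic of a Schröder path: `bounce(Γ(γ)) + numph(γ)` -/
def bounce (g : List Step) : ℕ :=
  let w := g.filter (fun s => s ≠ D)
  let nn := cnt E w
  if nn = 0 then 0 else bounceAux g w nn g.length 0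

/-- the (signed) area coordinate `a_i = m·i - (#E before the (i+1)-st N)` of line `i`
(0-indexed) for a path in an `n × mn` grid. -/
def aLine (m : ℕ) (g : List Step) (i : ℕ) : ℤ := (m : ℤ) * i - eBefore g i

/-- an `(n, mn)`-Dyck path: `n` north steps, `mn` east steps, no diagonal steps,
staying weakly above the main diagonal. -/
def IsParkingPath (n m : ℕ) (g : List Step) : Prop :=
  (∀ s ∈ g, s ≠ D) ∧ cnt N g = n ∧ cnt E g = m * n ∧
    ∀ p : List Step, p <+: g → cnt E p ≤ m * cnt N p

/-- an `(n, mn)`-parking function: an `(n,mn)`-Dyck path labelled by a permutation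
`w` of `{0, …, n-1}` whose labels increase within each column. -/
def IsParking (n m : ℕ) (g : List Step) (w : Fin n → Fin n) : Prop :=
  IsParkingPath n m g ∧ Function.Bijective w ∧
    ∀ i j : Fin n, (j : ℕ) = (i : ℕ) + 1 → eBefore g (i : ℕ) = eBefore g (j : ℕ) → w i < w j

/-- the diagonal inversion statistic of an `(n, mn)`-parking function -/
def dinv (n m : ℕ) (g : List Step) (w : Fin n → Fin n) : ℤ :=
  ∑ i : Fin n, ∑ j : Fin n,
    if (i : ℕ) < (j : ℕ) then
      (if w i < w j then max 0 ((m : ℤ) - |aLine m g (i : ℕ) - aLine m g (j : ℕ)|) else 0) +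
        (if w j < w i then max 0 ((m : ℤ) - |aLine m g (j : ℕ) - aLine m g (i : ℕ) + 1|) else 0)
    else 0

/-- the number of descents of the word `w` -/
def desNum (n : ℕ) (w : Fin n → Fin n) : ℕ :=
  ((Finset.range (n-1)).filter fun i =>
    ∃ hj : i + 1 < n, w ⟨i+1, hj⟩ < w ⟨i, Nat.lt_of_succ_lt hj⟩).card

/-- the major index of the word `w` (with positions 1-indexed as usual) -/
def majStat (n : ℕ) (w : Fin n → Fin n) : ℕ :=
  ∑ i ∈ (Finset.range (n-1)).filter (fun i =>
    ∃ hj : i + 1 < n, w ⟨i+1, hj⟩ < w ⟨i, Nat.lt_of_succ_lt hj⟩), (i+1)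

/-- the reading word of a labelled path in an `n × mn` grid: labels are read along
diagonals parallel to the main diagonal, starting with the farthest diagonal,
each diagonal being read from top-right to bottom-left. -/
def readWord (n m : ℕ) (g : List Step) (lab : ℕ → ℕ) : List ℕ :=
  ((List.range (m * n + 1)).map fun k =>
    (((List.range n).reverse.filter fun i => aLine m g i = (m * n : ℤ) - k).map lab)).flatten

/-- the labelling function `ℕ → ℕ` associated to a permutation of `Fin n` -/
def labOf {n : ℕ} (w : Fin n → Fin n) : ℕ → ℕ :=
  fun i => if h : i < n then (w ⟨i, h⟩ : ℕ) else 0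

/-- one step of the algorithm `φ`, on the reversed word: find the rightmost
(i.e. first in the reversed word) east step not followed by an east step,
and swap it with the letter following it. -/
def phiRevAux : List Step → List Step
  | a :: E :: t => if a ≠ E then E :: a :: t else a :: phiRevAux (E :: t)
  | a :: t => a :: phiRevAux t
  | [] => []

/-- one step of the algorithm `φ` -/
def phiStep (w : List Step) : List Step := (phiRevAux w.reverse).reverse

/-- the sequence `φ(γ) = (γ₀, γ₁, …, γ_{bounce γ})` produced by the algorithm -/
def phiSeq (g : List Step) : List (List Step) :=
  (List.range (bounce g + 1)).map fun i => phiStep^[i] g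

/-- the union of all sequences `φ(γ)` over area-0 Schröder paths with `n` blocks -/
def phiUniv (n : ℕ) : Set (List Step) :=
  {p | ∃ g, IsNED g ∧ cnt N g + cnt D g = n ∧ p ∈ phiSeq g}

/-- the map replacing each block `NE` by `N` and each `D` by `E` -/
def theta : List Step → List Step
  | N :: E :: w => N :: theta w
  | D :: w => E :: theta w
  | _ :: w => theta w
  | [] => []

/-- the cells of the hook-shaped Young diagram `(d, 1^{n-d})` (row 0 is the arm). -/
def hookCells (n d : ℕ) : Finset (ℕ × ℕ) :=
  ((Finset.range d).image fun c => ((0 : ℕ), c)) ∪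
    ((Finset.range (n - d + 1)).image fun r => (r, (0 : ℕ)))

/-- a standard Young tableau of hook shape `(d, 1^{n-d})`: `pos i` is the cell
`(row, column)` containing the entry `i+1`; entries increase along rows and columns. -/
structure HookSYT (n d : ℕ) where
  pos : Fin n → ℕ × ℕ
  mem : ∀ i, pos i ∈ hookCells n d
  inj : Function.Injective pos
  rowInc : ∀ i j : Fin n, (pos i).1 = (pos j).1 → (pos i).2 < (pos j).2 → i < j
  colInc : ∀ i j : Fin n, (pos i).2 = (pos j).2 → (pos i).1 < (pos j).1 → i < j

/-- the descent set of a standard Young tableau: entries `i ∈ {1, …, n-1}` such that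
the entry `i+1` lies in a strictly higher row than `i`. -/
def Des {n d : ℕ} (τ : HookSYT n d) : Finset ℕ :=
  (Finset.Icc 1 (n-1)).filter fun i =>
    ∃ hi : i < n, ∃ hi' : i - 1 < n, (τ.pos ⟨i - 1, hi'⟩).1 < (τ.pos ⟨i, hi⟩).1

/-- the major index of a standard Young tableau -/
def majT {n d : ℕ} (τ : HookSYT n d) : ℕ := ∑ i ∈ Des τ, i

/-- the number of descents of a standard Young tableau -/
def desT {n d : ℕ} (τ : HookSYT n d) : ℕ := (Des τ).card

/-- the maximum of the descent set -/
def maxDes {n d : ℕ} (τ : HookSYT n d) : ℕ := (Des τ).sup id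

/-- the map `M_{n,d}`: the path `γ₁γ₂⋯γₙ` with `γₙ = NE`, `γ_{n-i} = NE` if
`i ∈ Des τ` and `γ_{n-i} = D` otherwise -/
def Mmap (n d : ℕ) (τ : HookSYT n d) : List Step :=
  (((List.range n).map fun j =>
    if j = n - 1 then [N, E]
    else if (n - 1 - j) ∈ Des τ then [N, E] else [D])).flatten

/-- the map `S_{n,d}`: the path `γ₁⋯γ_{n-1}` with `γ_{n-i} = NNEE` if
`i = max Des τ` and `1 ∈ Des τ`, `γ_{n-i} = NDE` if `i = max Des τ` and
`1 ∉ Des τ`, `γ_{n-i} = NE` if `i = 1` or `i ∈ Des τ ∖ {max Des τ}`, and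
`γ_{n-i} = D` otherwise. -/
def Smap (n d : ℕ) (τ : HookSYT n d) : List Step :=
  (((List.range (n-1)).map fun j =>
    if (n - 1 - j) = maxDes τ then (if 1 ∈ Des τ then [N,N,E,E] else [N,D,E])
    else if (n - 1 - j) = 1 ∨ (n - 1 - j) ∈ Des τ then [N,E] else [D])).flatten

/-- the set `V_{n,d}` of Schröder paths of the form `Dʲ NNEE u` or `Dʲ NDE u`
with `u ∈ {NE,D}* NE`, having `n-d+1` north steps and `d-1` diagonal steps. -/
def Vset (n d : ℕ) : Set (List Step) :=
  {g | (∃ j u, IsNED u ∧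
      (g = List.replicate j D ++ [N,N,E,E] ++ (u ++ [N,E]) ∨
       g = List.replicate j D ++ [N,D,E] ++ (u ++ [N,E]))) ∧
     cnt N g = n - d + 1 ∧ cnt D g = d - 1}

/-- Schröder paths in an `n × n` grid with `dd` diagonal steps, area `a`,
ending with `NE` -/
def SchT (n dd a : ℕ) : Set (List Step) :=
  {g | IsSchroeder g ∧ cnt D g = dd ∧ cnt N g = n - dd ∧ area g = a ∧ ∃ u, g = u ++ [N, E]}

/-- the 'upper' forms: `Dʲ NNEE γ' NE NE` or `γ' NE Dʲ NNEE γ''` -/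
def UpperForm (g : List Step) : Prop :=
  (∃ j u, IsNED u ∧ g = List.replicate j D ++ [N,N,E,E] ++ u ++ [N,E,N,E]) ∨
  (∃ u j v, IsNED u ∧ g = u ++ [N,E] ++ List.replicate j D ++ [N,N,E,E] ++ v)

/-- the 'lower' forms: `Dʲ NNEE γ' D NE` or `γ' NDE Dʲ NE γ''` -/
def LowerForm (g : List Step) : Prop :=
  (∃ j u, IsNED u ∧ g = List.replicate j D ++ [N,N,E,E] ++ u ++ [D,N,E]) ∨
  (∃ u j v, IsNED u ∧ g = u ++ [N,D,E] ++ List.replicate j D ++ [N,E] ++ v)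

/-- the number of distinct columns of the path -/
def Tcols (n : ℕ) (g : List Step) : ℕ :=
  ((Finset.range n).image fun i => eBefore g i).card

/-- the `q`-integer `[k]_q = 1 + q + ⋯ + q^{k-1}` as a polynomial -/
noncomputable def qInt (k : ℕ) : Polynomial ℤ := ∑ i ∈ Finset.range k, Polynomial.X ^ i

/-- the `q`-factorial `[k]!_q` -/
noncomputable def qFact (k : ℕ) : Polynomial ℤ := ∏ i ∈ Finset.range k, qInt (i+1)


/-! ### Auxiliary development for Statement 7 -/

section Stmt7Aux

open List

/-- predicate: a word with no `E` steps -/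
def NonE (S : List Step) : Prop := ∀ c ∈ S, c ≠ E

lemma nonE_nil : NonE [] := by intro c hc; cases hc

lemma nonE_cons_iff {c : Step} {S : List Step} : NonE (c :: S) ↔ c ≠ E ∧ NonE S := by
  constructor
  · intro h; exact ⟨h c mem_cons_self, fun d hd => h d (mem_cons_of_mem _ hd)⟩
  · rintro ⟨h1, h2⟩ d hd
    rcases mem_cons.1 hd with rfl | hd
    · exact h1
    · exact h2 d hd

lemma nonE_append {S T : List Step} (hS : NonE S) (hT : NonE T) : NonE (S ++ T) := by
  intro c hc; rcases mem_append.1 hc with h | h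
  · exact hS c h
  · exact hT c h

lemma nonE_reverse {S : List Step} (hS : NonE S) : NonE S.reverse := by
  intro c hc; exact hS c (mem_reverse.1 hc)

lemma nonE_cntE {S : List Step} (hS : NonE S) : cnt E S = 0 := by
  simp only [cnt]
  exact List.count_eq_zero.2 (fun h => hS E h rfl)

lemma cnt_cons_self (a : Step) (w : List Step) : cnt a (a :: w) = cnt a w + 1 := by
  simp [cnt, List.count_cons]

lemma cnt_cons_ne {s a : Step} (h : a ≠ s) (w : List Step) : cnt s (a :: w) = cnt s w := by
  simp [cnt, List.count_cons, h]

lemma cnt_nil (s : Step) : cnt s [] = 0 := rfl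

lemma cnt_append' (s : Step) (u v : List Step) : cnt s (u ++ v) = cnt s u + cnt s v :=
  List.count_append

lemma cnt_cons' (s c : Step) (w : List Step) : cnt s (c :: w) = cnt s [c] + cnt s w := by
  rcases eq_or_ne c s with rfl | h
  · rw [cnt_cons_self, cnt_cons_self, cnt_nil]
    omega
  · rw [cnt_cons_ne h, cnt_cons_ne h, cnt_nil]
    omega

lemma cnt_shuffle (s c : Step) (S S'' : List Step) :
    cnt s S + cnt s (c :: S'') = cnt s (S ++ [c]) + cnt s S'' := by
  rw [cnt_cons', cnt_append']
  omega

lemma nonE_len {S : List Step} (hS : NonE S) : cnt N S + cnt D S = S.length := by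
  induction S with
  | nil => rfl
  | cons c S ih =>
    rcases nonE_cons_iff.1 hS with ⟨h1, h2⟩
    have h3 := ih h2
    cases c with
    | E => exact absurd rfl h1
    | N =>
      rw [cnt_cons_self, cnt_cons_ne (by simp), List.length_cons]
      omega
    | D =>
      rw [cnt_cons_self, cnt_cons_ne (by simp), List.length_cons]
      omega

lemma cnt_append (s : Step) (u v : List Step) : cnt s (u ++ v) = cnt s u + cnt s v :=
  List.count_append

/-! #### phiRevAux equations -/

lemma phiRevAux_nil : phiRevAux [] = [] := rfl

lemma phiRevAux_cons_E (t : List Step) : phiRevAux (E :: t) = E :: phiRevAux t := by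
  match t with
  | [] => rfl
  | N :: t => rfl
  | D :: t => rfl
  | E :: t => simp [phiRevAux]

lemma phiRevAux_swap {a : Step} (ha : a ≠ E) (t : List Step) :
    phiRevAux (a :: E :: t) = E :: a :: t := by
  cases a with
  | E => exact absurd rfl ha
  | N => simp [phiRevAux]
  | D => simp [phiRevAux]

lemma phiRevAux_cons_cons (a : Step) {b : Step} (hb : b ≠ E) (t : List Step) :
    phiRevAux (a :: b :: t) = a :: phiRevAux (b :: t) := by
  cases b with
  | E => exact absurd rfl hb
  | N => rfl
  | D => rfl

lemma phiRevAux_repE (r : ℕ) (z : List Step) :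
    phiRevAux (List.replicate r E ++ z) = List.replicate r E ++ phiRevAux z := by
  induction r with
  | zero => simp
  | succ r ih => simp [List.replicate_succ, phiRevAux_cons_E, ih]

lemma phiRevAux_nonE_prefix (u : List Step) (hu : NonE u) {c : Step} (hc : c ≠ E)
    (y : List Step) : phiRevAux (u ++ (c :: E :: y)) = u ++ (E :: c :: y) := by
  induction u with
  | nil => simpa using phiRevAux_swap hc y
  | cons d u ih =>
    rcases nonE_cons_iff.1 hu with ⟨hd, hu'⟩
    have ih' := ih hu'
    cases u with
    | nil =>
      show phiRevAux (d :: (c :: E :: y)) = d :: (E :: c :: y)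
      rw [phiRevAux_cons_cons d hc, phiRevAux_swap hc]
    | cons e u' =>
      have he : e ≠ E := (nonE_cons_iff.1 hu').1
      show phiRevAux (d :: (e :: (u' ++ c :: E :: y))) = d :: (e :: (u' ++ E :: c :: y))
      rw [phiRevAux_cons_cons d he]
      show d :: phiRevAux ((e :: u') ++ c :: E :: y) = d :: ((e :: u') ++ E :: c :: y)
      rw [ih']

/-! #### the canonical chain form -/

/-- the general form of elements of `φ`-sequences -/
def mkC (G S S' : List Step) (r : ℕ) : List Step :=
  G ++ N :: (S ++ E :: (S' ++ List.replicate r E))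

lemma mkC_cons_D (G S S' : List Step) (r : ℕ) :
    mkC (D :: G) S S' r = D :: mkC G S S' r := rfl

lemma mkC_cons_NE (G S S' : List Step) (r : ℕ) :
    mkC (N :: E :: G) S S' r = N :: E :: mkC G S S' r := rfl

lemma phiStep_mkC (G S S'' : List Step) {c : Step} (hc : c ≠ E) (hS'' : NonE S'')
    (r : ℕ) : phiStep (mkC G S (c :: S'') r) = mkC G (S ++ [c]) S'' r := by
  have h1 : (mkC G S (c :: S'') r).reverse =
      List.replicate r E ++ (S''.reverse ++ (c :: E :: (S.reverse ++ N :: G.reverse))) := by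
    simp [mkC, List.reverse_append, List.append_assoc]
  have h2 : phiRevAux ((mkC G S (c :: S'') r).reverse) =
      List.replicate r E ++ (S''.reverse ++ (E :: c :: (S.reverse ++ N :: G.reverse))) := by
    rw [h1, phiRevAux_repE, phiRevAux_nonE_prefix _ (nonE_reverse hS'') hc]
  unfold phiStep
  rw [h2]
  simp [mkC, List.reverse_append, List.append_assoc]

/-! #### area lemmas -/

/-- the height after reading a word, starting from height `h` (with truncated
subtraction, as in `areaAux`) -/
def hgt : ℕ → List Step → ℕ
  | h, [] => h
  | h, N :: w => hgt (h+1) w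
  | h, E :: w => hgt (h-1) w
  | h, D :: w => hgt h w

lemma hgt_append (u v : List Step) (h : ℕ) : hgt h (u ++ v) = hgt (hgt h u) v := by
  induction u generalizing h with
  | nil => rfl
  | cons c u ih => cases c <;> simp [hgt, ih]

lemma hgt_NED {G : List Step} (hG : IsNED G) : ∀ h, hgt h G = h := by
  induction hG with
  | nil => intro h; rfl
  | ne _ ih => intro h; simpa [hgt] using ih h
  | d _ ih => intro h; exact ih h

lemma hgt_nonE_ge {S : List Step} (hS : NonE S) : ∀ h, h ≤ hgt h S := by
  induction S with
  | nil => intro h; exact le_refl h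
  | cons c S ih =>
    rcases nonE_cons_iff.1 hS with ⟨h1, h2⟩
    intro h
    cases c with
    | E => exact absurd rfl h1
    | N => exact le_trans (Nat.le_succ h) (ih h2 (h+1))
    | D => exact ih h2 h

lemma areaAux_N (h : ℕ) (w : List Step) : areaAux h (N :: w) = h + areaAux (h+1) w := rfl
lemma areaAux_E (h : ℕ) (w : List Step) : areaAux h (E :: w) = areaAux (h-1) w := rfl
lemma areaAux_D (h : ℕ) (w : List Step) : areaAux h (D :: w) = h + areaAux h w := rfl
lemma hgt_N (h : ℕ) (w : List Step) : hgt h (N :: w) = hgt (h+1) w := rfl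
lemma hgt_E (h : ℕ) (w : List Step) : hgt h (E :: w) = hgt (h-1) w := rfl
lemma hgt_D (h : ℕ) (w : List Step) : hgt h (D :: w) = hgt h w := rfl

lemma areaAux_swap {c : Step} (hc : c ≠ E) :
    ∀ (X : List Step) (Y : List Step) (h : ℕ), 1 ≤ hgt h X →
    areaAux h (X ++ c :: E :: Y) = areaAux h (X ++ E :: c :: Y) + 1 := by
  intro X
  induction X with
  | nil =>
    intro Y h hh
    simp only [hgt] at hh
    cases c with
    | E => exact absurd rfl hc
    | N =>
      simp only [nil_append, areaAux_N, areaAux_E]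
      have h1 : h + 1 - 1 = h := by omega
      have h2 : h - 1 + 1 = h := by omega
      rw [h1, h2]
      omega
    | D =>
      simp only [nil_append, areaAux_D, areaAux_E]
      omega
  | cons a X ih =>
    intro Y h hh
    cases a with
    | N =>
      simp only [cons_append, areaAux_N]
      have := ih Y (h+1) (by rwa [hgt_N] at hh)
      omega
    | E =>
      simp only [cons_append, areaAux_E]
      exact ih Y (h-1) (by rwa [hgt_E] at hh)
    | D =>
      simp only [cons_append, areaAux_D]
      have := ih Y h (by rwa [hgt_D] at hh)
      omega

lemma area_NED {g : List Step} (hg : IsNED g) : area g = 0 := by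
  have : ∀ w, IsNED w → areaAux 0 w = 0 := by
    intro w hw
    induction hw with
    | nil => rfl
    | ne _ ih => simpa [areaAux] using ih
    | d _ ih => simpa [areaAux] using ih
  exact this g hg

lemma mkC_eq_left (G S S'' : List Step) (c : Step) (r : ℕ) :
    mkC G S (c :: S'') r = (G ++ N :: S) ++ E :: c :: (S'' ++ List.replicate r E) := by
  simp [mkC, List.append_assoc]

lemma mkC_eq_right (G S S'' : List Step) (c : Step) (r : ℕ) :
    mkC G (S ++ [c]) S'' r = (G ++ N :: S) ++ c :: E :: (S'' ++ List.replicate r E) := by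
  simp [mkC, List.append_assoc]

lemma area_mkC_step {G S S'' : List Step} {c : Step} (hG : IsNED G) (hS : NonE S)
    (hc : c ≠ E) (r : ℕ) :
    area (mkC G (S ++ [c]) S'' r) = area (mkC G S (c :: S'') r) + 1 := by
  rw [mkC_eq_left, mkC_eq_right]
  unfold area
  apply areaAux_swap hc
  rw [hgt_append, hgt_NED hG]
  show 1 ≤ hgt (0+1) S
  exact hgt_nonE_ge hS 1

/-! #### nBefore / dAfterE computations -/

lemma nBefore_cons_N (w : List Step) (j : ℕ) : nBefore (N :: w) j = 1 + nBefore w j := rfl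

lemma nBefore_cons_D (w : List Step) (j : ℕ) : nBefore (D :: w) j = nBefore w j := rfl

lemma nBefore_cons_E_zero (w : List Step) : nBefore (E :: w) 0 = 0 := by simp [nBefore]

lemma nBefore_cons_E_succ (w : List Step) (j : ℕ) :
    nBefore (E :: w) (j+1) = nBefore w j := by simp [nBefore]

lemma nBefore_repN (k : ℕ) (x : List Step) (j : ℕ) :
    nBefore (List.replicate k N ++ x) j = k + nBefore x j := by
  induction k with
  | zero => simp
  | succ k ih => simp [List.replicate_succ, nBefore_cons_N, ih]; omega

lemma nBefore_repE (r : ℕ) : ∀ j, nBefore (List.replicate r E) j = 0 := by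
  induction r with
  | zero => intro j; rfl
  | succ r ih =>
    intro j
    cases j with
    | zero => simp [List.replicate_succ, nBefore_cons_E_zero]
    | succ j => simp [List.replicate_succ, nBefore_cons_E_succ, ih]

lemma dAfterE_cons_N (w : List Step) (e : ℕ) : dAfterE (N :: w) e = dAfterE w e := rfl

lemma dAfterE_cons_D (w : List Step) (e : ℕ) : dAfterE (D :: w) e = dAfterE w e := rfl

lemma dAfterE_cons_E_one (w : List Step) : dAfterE (E :: w) 1 = cnt D w := by
  simp [dAfterE]

lemma dAfterE_cons_E_succ (w : List Step) (e : ℕ) :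
    dAfterE (E :: w) (e+2) = dAfterE w (e+1) := by
  have : ¬ (e + 2 ≤ 1) := by omega
  simp [dAfterE, this]

lemma dAfterE_nonE_prefix {u : List Step} (hu : NonE u) (x : List Step) (e : ℕ) :
    dAfterE (u ++ x) e = dAfterE x e := by
  induction u with
  | nil => rfl
  | cons c u ih =>
    rcases nonE_cons_iff.1 hu with ⟨h1, h2⟩
    cases c with
    | E => exact absurd rfl h1
    | N => simpa [dAfterE_cons_N] using ih h2
    | D => simpa [dAfterE_cons_D] using ih h2

lemma cntD_repE (r : ℕ) : cnt D (List.replicate r E) = 0 := by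
  simp [cnt, List.count_replicate]

lemma dAfterE_repE (r : ℕ) : ∀ e, dAfterE (List.replicate r E) e = 0 := by
  induction r with
  | zero => intro e; rfl
  | succ r ih =>
    intro e
    show dAfterE (E :: List.replicate r E) e = 0
    rcases le_or_gt e 1 with h | h
    · simp [dAfterE, h, cntD_repE]
    · have h2 : ¬ (e ≤ 1) := by omega
      simp [dAfterE, h2, ih]

lemma cnt_repE_E (r : ℕ) : cnt E (List.replicate r E) = r := by
  simp [cnt, List.count_replicate]

lemma cnt_repN_E (r : ℕ) : cnt E (List.replicate r N) = 0 := by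
  simp only [cnt]
  rw [List.count_eq_zero]
  intro h
  have := List.eq_of_mem_replicate h
  exact absurd this (by simp)

/-! #### filter computations -/

lemma filterD_cons_N (w : List Step) :
    (N :: w).filter (fun s => s ≠ D) = N :: w.filter (fun s => s ≠ D) := by
  simp

lemma filterD_cons_E (w : List Step) :
    (E :: w).filter (fun s => s ≠ D) = E :: w.filter (fun s => s ≠ D) := by
  simp

lemma filterD_cons_D (w : List Step) :
    (D :: w).filter (fun s => s ≠ D) = w.filter (fun s => s ≠ D) := by
  simp

lemma cntE_filterD (g : List Step) : cnt E (g.filter (fun s => s ≠ D)) = cnt E g := by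
  induction g with
  | nil => rfl
  | cons c g ih =>
    cases c with
    | N => rw [filterD_cons_N, cnt_cons_ne (by simp), cnt_cons_ne (by simp), ih]
    | E => rw [filterD_cons_E, cnt_cons_self, cnt_cons_self, ih]
    | D => rw [filterD_cons_D, cnt_cons_ne (by simp), ih]

lemma filterD_nonE {S : List Step} (hS : NonE S) :
    S.filter (fun s => s ≠ D) = List.replicate (cnt N S) N := by
  induction S with
  | nil => rfl
  | cons c S ih =>
    rcases nonE_cons_iff.1 hS with ⟨h1, h2⟩
    cases c with
    | E => exact absurd rfl h1
    | N => rw [filterD_cons_N, cnt_cons_self, ih h2, List.replicate_succ]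
    | D => rw [filterD_cons_D, cnt_cons_ne (by simp), ih h2]

lemma filterD_repE (r : ℕ) :
    (List.replicate r E).filter (fun s => s ≠ D) = List.replicate r E := by
  induction r with
  | zero => rfl
  | succ r ih => simp [List.replicate_succ, ih]

/-! #### bounceAux lemmas -/

lemma bounceAux_succ (g w : List Step) (nn f j : ℕ) :
    bounceAux g w nn (f+1) j = dAfterE g (j+1) +
      (if nn ≤ nBefore w j ∨ nBefore w j ≤ j then 0
       else (nn - nBefore w j) + bounceAux g w nn f (nBefore w j)) := rfl

lemma bounceAux_fuel (g w : List Step) (nn : ℕ) :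
    ∀ f₁ f₂ j, 1 ≤ f₁ → 1 ≤ f₂ → nn - j ≤ f₁ → nn - j ≤ f₂ →
      bounceAux g w nn f₁ j = bounceAux g w nn f₂ j := by
  intro f₁
  induction f₁ with
  | zero => intro f₂ j h1; omega
  | succ f₁ ih =>
    intro f₂ j _ h2 hf1 hf2
    obtain ⟨f₂', rfl⟩ : ∃ f₂', f₂ = f₂' + 1 := ⟨f₂ - 1, by omega⟩
    rw [bounceAux_succ, bounceAux_succ]
    by_cases hcond : nn ≤ nBefore w j ∨ nBefore w j ≤ j
    · simp [hcond]
    · simp only [hcond, if_false]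
      push_neg at hcond
      have hb1 : nBefore w j < nn := hcond.1
      have hb2 : j < nBefore w j := hcond.2
      rw [ih f₂' (nBefore w j) (by omega) (by omega) (by omega) (by omega)]

lemma bounceAux_congr_g {g g' : List Step} (w : List Step) (nn : ℕ)
    (h : ∀ e, dAfterE g e = dAfterE g' e) :
    ∀ f j, bounceAux g w nn f j = bounceAux g' w nn f j := by
  intro f
  induction f with
  | zero => intro j; rfl
  | succ f ih => intro j; rw [bounceAux_succ, bounceAux_succ, h, ih]

lemma bounceAux_shift (p' w' : List Step) (nn' : ℕ) :
    ∀ f j, bounceAux (N :: E :: p') (N :: E :: w') (nn'+1) f (j+1) =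
      bounceAux p' w' nn' f j := by
  intro f
  induction f with
  | zero => intro j; rfl
  | succ f ih =>
    intro j
    rw [bounceAux_succ, bounceAux_succ]
    have hnB : nBefore (N :: E :: w') (j+1) = 1 + nBefore w' j := by
      rw [nBefore_cons_N, nBefore_cons_E_succ]
    have hdA : dAfterE (N :: E :: p') (j+1+1) = dAfterE p' (j+1) := by
      rw [dAfterE_cons_N, dAfterE_cons_E_succ]
    rw [hnB, hdA]
    have hcond : (nn' + 1 ≤ 1 + nBefore w' j ∨ 1 + nBefore w' j ≤ j + 1) ↔
        (nn' ≤ nBefore w' j ∨ nBefore w' j ≤ j) := by omega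
    by_cases hc : nn' ≤ nBefore w' j ∨ nBefore w' j ≤ j
    · rw [if_pos hc, if_pos (hcond.2 hc)]
    · have hc' : ¬ (nn' + 1 ≤ 1 + nBefore w' j ∨ 1 + nBefore w' j ≤ j + 1) := by
        rw [hcond]; exact hc
      simp only [hc, hc', if_false]
      have : nn' + 1 - (1 + nBefore w' j) = nn' - nBefore w' j := by omega
      rw [this]
      have hshift : 1 + nBefore w' j = nBefore w' j + 1 := by omega
      rw [hshift, ih]

lemma bounce_eq (g : List Step) :
    bounce g = if cnt E (g.filter (fun s => s ≠ D)) = 0 then 0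
      else bounceAux g (g.filter (fun s => s ≠ D)) (cnt E (g.filter (fun s => s ≠ D)))
        g.length 0 := rfl

/-! #### bounce peel lemmas -/

lemma bounce_nil : bounce [] = 0 := rfl

lemma bounce_cons_D (q : List Step) : bounce (D :: q) = bounce q := by
  rw [bounce_eq, bounce_eq, filterD_cons_D]
  by_cases h : cnt E (q.filter (fun s => s ≠ D)) = 0
  · rw [if_pos h, if_pos h]
  · rw [if_neg h, if_neg h]
    rw [bounceAux_congr_g _ _ (fun e => dAfterE_cons_D q e)]
    have hnn : cnt E (q.filter (fun s => s ≠ D)) ≤ q.length := by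
      calc cnt E (q.filter (fun s => s ≠ D)) ≤ (q.filter (fun s => s ≠ D)).length :=
            List.count_le_length
        _ ≤ q.length := List.length_filter_le _ _
    have hq1 : 1 ≤ q.length := le_trans (Nat.one_le_iff_ne_zero.2 h) hnn
    refine bounceAux_fuel q _ _ _ _ 0 ?_ ?_ ?_ ?_
    · simp
    · exact hq1
    · simp only [Nat.sub_zero, List.length_cons]; omega
    · simp only [Nat.sub_zero]; exact hnn

lemma bounce_cons_NE (q : List Step) :
    bounce (N :: E :: q) = cnt D q + cnt E q + bounce q := by
  rw [bounce_eq, bounce_eq, filterD_cons_N, filterD_cons_E]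
  have hEq : cnt E (N :: E :: (q.filter (fun s => s ≠ D))) =
      cnt E (q.filter (fun s => s ≠ D)) + 1 := by
    rw [cnt_cons_ne (by simp), cnt_cons_self]
  rw [hEq, cntE_filterD]
  have hne : ¬ (cnt E q + 1 = 0) := by omega
  rw [if_neg hne]
  have hlen : (N :: E :: q).length = q.length + 2 := by simp
  rw [hlen, bounceAux_succ]
  simp only [Nat.zero_add]
  have hnB0 : nBefore (N :: E :: q.filter (fun s => s ≠ D)) 0 = 1 := by
    rw [nBefore_cons_N, nBefore_cons_E_zero]
  have hdA1 : dAfterE (N :: E :: q) 1 = cnt D q := by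
    rw [dAfterE_cons_N, dAfterE_cons_E_one]
  rw [hnB0, hdA1]
  by_cases hq : cnt E q = 0
  · have hc1 : cnt E q + 1 ≤ 1 ∨ (1 : ℕ) ≤ 0 := by omega
    rw [if_pos hc1, if_pos hq]
    omega
  · have hcond : ¬ (cnt E q + 1 ≤ 1 ∨ (1 : ℕ) ≤ 0) := by omega
    rw [if_neg hcond, if_neg hq]
    obtain ⟨m, hm⟩ : ∃ m, cnt E q = m + 1 := ⟨cnt E q - 1, by omega⟩
    rw [hm]
    have hsh : bounceAux (N :: E :: q) (N :: E :: q.filter (fun s => s ≠ D))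
        (m + 1 + 1) (q.length + 1) 1 =
        bounceAux q (q.filter (fun s => s ≠ D)) (m + 1) (q.length + 1) 0 :=
      bounceAux_shift q (q.filter (fun s => s ≠ D)) (m+1) (q.length + 1) 0
    rw [hsh]
    have hle : m + 1 ≤ q.length := by
      have h2 := List.count_le_length (a := E) (l := q)
      simp only [cnt] at hm
      omega
    rw [bounceAux_fuel q _ (m+1) (q.length + 1) (q.length) 0 (by omega) (by omega)
      (by omega) (by omega)]
    omega

lemma bounce_allD {g : List Step} (hg : ∀ x ∈ g, x = D) : bounce g = 0 := by
  induction g with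
  | nil => rfl
  | cons c g ih =>
    have hc : c = D := hg c mem_cons_self
    subst hc
    rw [bounce_cons_D]
    exact ih (fun x hx => hg x (mem_cons_of_mem _ hx))

/-! #### bounce of the base form -/

lemma bounce_base {S S' : List Step} (hS : NonE S) (hS' : NonE S') :
    bounce (N :: (S ++ E :: (S' ++ List.replicate (cnt N S + cnt N S') E))) = S'.length := by
  set α := cnt N S with hα
  set β := cnt N S' with hβ
  set p := N :: (S ++ E :: (S' ++ List.replicate (α + β) E)) with hp
  have hw : p.filter (fun s => s ≠ D) =
      N :: (List.replicate α N ++ E :: (List.replicate β N ++ List.replicate (α + β) E)) := by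
    rw [hp, filterD_cons_N, List.filter_append, filterD_nonE hS, filterD_cons_E,
      List.filter_append, filterD_nonE hS', filterD_repE]
  have hnn : cnt E (p.filter (fun s => s ≠ D)) = 1 + (α + β) := by
    rw [hw, cnt_cons_ne (by simp), cnt_append, cnt_repN_E, cnt_cons_self, cnt_append,
      cnt_repN_E, cnt_repE_E]
    omega
  rw [bounce_eq, hnn, hw]
  have hne : ¬ (1 + (α + β) = 0) := by omega
  rw [if_neg hne]
  have hlen : p.length = S.length + S'.length + (α + β) + 2 := by
    rw [hp]; simp; omega
  obtain ⟨f, hf⟩ : ∃ f, p.length = f + 2 := ⟨S.length + S'.length + (α + β), by omega⟩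
  rw [hf, bounceAux_succ]
  simp only [Nat.zero_add]
  have hnB0 : nBefore (N :: (List.replicate α N ++ E ::
      (List.replicate β N ++ List.replicate (α + β) E))) 0 = 1 + α := by
    rw [nBefore_cons_N, nBefore_repN, nBefore_cons_E_zero]
    omega
  have hdA1 : dAfterE p 1 = cnt D S' := by
    rw [hp, dAfterE_cons_N, dAfterE_nonE_prefix hS, dAfterE_cons_E_one, cnt_append',
      cntD_repE]
    omega
  rw [hnB0, hdA1]
  rcases Nat.eq_zero_or_pos β with hb0 | hbpos
  · have hcond : 1 + (α + β) ≤ 1 + α ∨ 1 + α ≤ 0 := by omega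
    simp only [hcond, if_true]
    have : S'.length = cnt N S' + cnt D S' := (nonE_len hS').symm
    omega
  · have hcond : ¬ (1 + (α + β) ≤ 1 + α ∨ 1 + α ≤ 0) := by omega
    simp only [hcond, if_false]
    rw [bounceAux_succ]
    have hnB1 : nBefore (N :: (List.replicate α N ++ E ::
        (List.replicate β N ++ List.replicate (α + β) E))) (1 + α) = 1 + (α + β) := by
      rw [nBefore_cons_N, nBefore_repN]
      have : (1 : ℕ) + α = α + 1 := by omega
      rw [this, nBefore_cons_E_succ, nBefore_repN, nBefore_repE]
      omega
    rw [hnB1]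
    have hcond2 : 1 + (α + β) ≤ 1 + (α + β) ∨ 1 + (α + β) ≤ 1 + α := by omega
    simp only [hcond2, if_true]
    have hdA2 : dAfterE p (1 + α + 1) = 0 := by
      rw [hp, dAfterE_cons_N, dAfterE_nonE_prefix hS]
      have : 1 + α + 1 = α + 2 := by omega
      rw [this, dAfterE_cons_E_succ, dAfterE_nonE_prefix hS', dAfterE_repE]
    rw [hdA2]
    have : S'.length = cnt N S' + cnt D S' := (nonE_len hS').symm
    omega

/-! #### bounce along the chain -/

lemma cnt_mkC (s : Step) (G S S' : List Step) (r : ℕ) :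
    cnt s (mkC G S S' r) = cnt s G + cnt s [Step.N] + cnt s S + cnt s [Step.E]
      + cnt s S' + cnt s (List.replicate r E) := by
  simp [mkC, cnt, count_append, count_cons]
  omega

lemma bounce_mkC_step {G S S'' : List Step} {c : Step} (hG : IsNED G) (hS : NonE S)
    (hc : c ≠ E) (hS'' : NonE S'') {r : ℕ} (hr : r = cnt N S + cnt N (c :: S'')) :
    bounce (mkC G S (c :: S'') r) = bounce (mkC G (S ++ [c]) S'' r) + 1 := by
  have hr' : r = cnt N (S ++ [c]) + cnt N S'' := by
    rw [hr]
    exact cnt_shuffle N c S S''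
  induction hG with
  | nil =>
    have h1 : mkC ([] : List Step) S (c :: S'') r =
        N :: (S ++ E :: ((c :: S'') ++ List.replicate (cnt N S + cnt N (c :: S'')) E)) := by
      rw [← hr]; rfl
    have h2 : mkC ([] : List Step) (S ++ [c]) S'' r =
        N :: ((S ++ [c]) ++ E :: (S'' ++ List.replicate (cnt N (S ++ [c]) + cnt N S'') E)) := by
      rw [← hr']; rfl
    rw [h1, h2, bounce_base hS (nonE_cons_iff.2 ⟨hc, hS''⟩),
      bounce_base (nonE_append hS (nonE_cons_iff.2 ⟨hc, nonE_nil⟩)) hS'']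
    simp
  | d _ ih =>
    rw [mkC_cons_D, mkC_cons_D, bounce_cons_D, bounce_cons_D, ih]
  | @ne G' hG' ih =>
    rw [mkC_cons_NE, mkC_cons_NE, bounce_cons_NE, bounce_cons_NE, ih]
    have hD := cnt_shuffle D c S S''
    have hE := cnt_shuffle E c S S''
    have h1 : cnt D (mkC G' S (c :: S'') r) = cnt D (mkC G' (S ++ [c]) S'' r) := by
      rw [cnt_mkC, cnt_mkC]
      omega
    have h2 : cnt E (mkC G' S (c :: S'') r) = cnt E (mkC G' (S ++ [c]) S'' r) := by
      rw [cnt_mkC, cnt_mkC]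
      omega
    omega

/-! #### existence of a step representation -/

lemma allD_cntN {G : List Step} (hG : ∀ x ∈ G, x = D) : cnt N G = 0 := by
  simp only [cnt]
  rw [List.count_eq_zero]
  intro h
  exact absurd (hG N h) (by simp)

lemma form_cases {G : List Step} (hG : IsNED G) :
    ∀ S r, NonE S → r = cnt N S →
    (∃ G₂ S₂ c S₂'' r₂, IsNED G₂ ∧ NonE S₂ ∧ c ≠ E ∧ NonE S₂'' ∧
      r₂ = cnt N S₂ + cnt N (c :: S₂'') ∧ mkC G S [] r = mkC G₂ S₂ (c :: S₂'') r₂)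
    ∨ ((∀ x ∈ G, x = D) ∧ bounce (mkC G S [] r) = 0) := by
  induction hG with
  | nil =>
    intro S r hS hr
    right
    refine ⟨(by intro x hx; cases hx), ?_⟩
    have h1 : mkC ([] : List Step) S [] r =
        N :: (S ++ E :: ([] ++ List.replicate (cnt N S + cnt N ([] : List Step)) E)) := by
      rw [hr]; rfl
    rw [h1, bounce_base hS nonE_nil]
    rfl
  | @d G' hG' ih =>
    intro S r hS hr
    rcases ih S r hS hr with ⟨G₂, S₂, c, S₂'', r₂, h1, h2, h3, h4, h5, h6⟩ | ⟨h1, h2⟩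
    · left
      exact ⟨D :: G₂, S₂, c, S₂'', r₂, IsNED.d h1, h2, h3, h4, h5, by
        rw [mkC_cons_D, mkC_cons_D, h6]⟩
    · right
      refine ⟨?_, ?_⟩
      · intro x hx
        rcases mem_cons.1 hx with rfl | hx
        · rfl
        · exact h1 x hx
      · rw [mkC_cons_D, bounce_cons_D, h2]
  | @ne G' hG' ih =>
    intro S r hS hr
    left
    rcases ih S r hS hr with ⟨G₂, S₂, c, S₂'', r₂, h1, h2, h3, h4, h5, h6⟩ | ⟨h1, h2⟩
    · exact ⟨N :: E :: G₂, S₂, c, S₂'', r₂, IsNED.ne h1, h2, h3, h4, h5, by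
        rw [mkC_cons_NE, mkC_cons_NE, h6]⟩
    · -- G' is all D's: re-represent with the distinguished E at the front
      have hnonE : NonE (G' ++ N :: S) := by
        apply nonE_append
        · intro x hx; rw [h1 x hx]; simp
        · exact nonE_cons_iff.2 ⟨by simp, hS⟩
      obtain ⟨c, S₂'', hcs⟩ : ∃ c S₂'', G' ++ N :: S = c :: S₂'' := by
        cases hG0 : G' ++ N :: S with
        | nil => exact absurd hG0 (by simp)
        | cons c t => exact ⟨c, t, rfl⟩
      have hc : c ≠ E := by
        rw [hcs] at hnonE
        exact (nonE_cons_iff.1 hnonE).1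
      have hS₂'' : NonE S₂'' := by
        rw [hcs] at hnonE
        exact (nonE_cons_iff.1 hnonE).2
      refine ⟨[], [], c, S₂'', r + 1, IsNED.nil, nonE_nil, hc, hS₂'', ?_, ?_⟩
      · have : cnt N (c :: S₂'') = cnt N (G' ++ N :: S) := by rw [hcs]
        rw [this, cnt_append]
        have : cnt N (N :: S) = cnt N S + 1 := by
          simp [cnt, count_cons]
        rw [allD_cntN h1, this, hr]
        simp [cnt]
      · show mkC (N :: E :: G') S [] r = mkC [] [] (c :: S₂'') (r+1)
        unfold mkC
        rw [← hcs]
        simp [List.replicate_succ, List.append_assoc]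

/-! #### the chain-form invariant -/

def InForm (p : List Step) : Prop :=
  ∃ G S S' r, IsNED G ∧ NonE S ∧ NonE S' ∧ r = cnt N S + cnt N S' ∧ p = mkC G S S' r

lemma filterE_cons_N (w : List Step) :
    (N :: w).filter (fun s => s ≠ E) = N :: w.filter (fun s => s ≠ E) := by simp

lemma filterE_cons_E (w : List Step) :
    (E :: w).filter (fun s => s ≠ E) = w.filter (fun s => s ≠ E) := by simp

lemma filterE_mkC (G S S' : List Step) (hS : NonE S) (hS' : NonE S') (r : ℕ) :
    (mkC G S S' r).filter (fun s => s ≠ E) =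
      G.filter (fun s => s ≠ E) ++ N :: (S ++ S') := by
  have hfS : S.filter (fun s => s ≠ E) = S := by
    rw [List.filter_eq_self]
    intro a ha
    simpa using hS a ha
  have hfS' : S'.filter (fun s => s ≠ E) = S' := by
    rw [List.filter_eq_self]
    intro a ha
    simpa using hS' a ha
  have hfrep : (List.replicate r E).filter (fun s => s ≠ E) = [] := by
    rw [List.filter_eq_nil_iff]
    intro a ha
    rw [List.eq_of_mem_replicate ha]
    simp
  show (G ++ N :: (S ++ E :: (S' ++ List.replicate r E))).filter (fun s => s ≠ E) = _
  rw [List.filter_append, filterE_cons_N, List.filter_append, hfS, filterE_cons_E,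
    List.filter_append, hfS', hfrep, List.append_nil]

lemma main_step {p : List Step} (hp : InForm p) (hb : 0 < bounce p) :
    InForm (phiStep p) ∧ area (phiStep p) = area p + 1 ∧
      bounce (phiStep p) + 1 = bounce p ∧
      (phiStep p).filter (fun s => s ≠ E) = p.filter (fun s => s ≠ E) := by
  obtain ⟨G, S, S', r, hG, hS, hS', hr, hpe⟩ := hp
  -- get a representation with nonempty `S'`
  have hrep : ∃ G₂ S₂ c S₂'' r₂, IsNED G₂ ∧ NonE S₂ ∧ c ≠ E ∧ NonE S₂'' ∧
      r₂ = cnt N S₂ + cnt N (c :: S₂'') ∧ p = mkC G₂ S₂ (c :: S₂'') r₂ := by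
    cases S' with
    | cons c S'' =>
      exact ⟨G, S, c, S'', r, hG, hS, (nonE_cons_iff.1 hS').1, (nonE_cons_iff.1 hS').2,
        hr, hpe⟩
    | nil =>
      rcases form_cases hG S r hS (by simpa [cnt] using hr) with
        ⟨G₂, S₂, c, S₂'', r₂, h1, h2, h3, h4, h5, h6⟩ | ⟨_, h2⟩
      · exact ⟨G₂, S₂, c, S₂'', r₂, h1, h2, h3, h4, h5, by rw [hpe, h6]⟩
      · rw [hpe] at hb; omega
  obtain ⟨G₂, S₂, c, S₂'', r₂, h1, h2, h3, h4, h5, h6⟩ := hrep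
  have hstep : phiStep p = mkC G₂ (S₂ ++ [c]) S₂'' r₂ := by
    rw [h6]; exact phiStep_mkC G₂ S₂ S₂'' h3 h4 r₂
  have hcS'' : NonE (c :: S₂'') := nonE_cons_iff.2 ⟨h3, h4⟩
  have hS₂c : NonE (S₂ ++ [c]) := nonE_append h2 (nonE_cons_iff.2 ⟨h3, nonE_nil⟩)
  have hr₂' : r₂ = cnt N (S₂ ++ [c]) + cnt N S₂'' := by
    rw [h5]
    exact cnt_shuffle N c S₂ S₂''
  refine ⟨⟨G₂, S₂ ++ [c], S₂'', r₂, h1, hS₂c, h4, hr₂', hstep⟩, ?_, ?_, ?_⟩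
  · rw [hstep, h6]
    exact area_mkC_step h1 h2 h3 r₂
  · rw [hstep, h6]
    rw [bounce_mkC_step h1 h2 h3 h4 h5]
  · rw [hstep, h6, filterE_mkC _ _ _ h2 hcS'' r₂, filterE_mkC _ _ _ hS₂c h4 r₂]
    simp [List.append_assoc]

lemma NED_form {g : List Step} (hg : IsNED g) : (∀ x ∈ g, x = D) ∨ InForm g := by
  induction hg with
  | nil => left; intro x hx; cases hx
  | @d g' _ ih =>
    rcases ih with h | ⟨G, S, S', r, h1, h2, h3, h4, h5⟩
    · left
      intro x hx
      rcases mem_cons.1 hx with rfl | hx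
      · rfl
      · exact h x hx
    · right
      exact ⟨D :: G, S, S', r, IsNED.d h1, h2, h3, h4, by rw [h5, mkC_cons_D]⟩
  | @ne g' hg' ih =>
    right
    rcases ih with h | ⟨G, S, S', r, h1, h2, h3, h4, h5⟩
    · refine ⟨[], [], g', 0, IsNED.nil, nonE_nil, ?_, ?_, ?_⟩
      · intro x hx; rw [h x hx]; simp
      · have := allD_cntN h
        simp [cnt] at this ⊢
        omega
      · simp [mkC]
    · exact ⟨N :: E :: G, S, S', r, IsNED.ne h1, h2, h3, h4, by rw [h5, mkC_cons_NE]⟩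

/-! #### the chain facts -/

lemma chain_facts {g : List Step} (hg : IsNED g) :
    ∀ i, i ≤ bounce g →
      area (phiStep^[i] g) = i ∧ bounce (phiStep^[i] g) = bounce g - i ∧
      (phiStep^[i] g).filter (fun s => s ≠ E) = g.filter (fun s => s ≠ E) ∧
      (0 < bounce g - i → InForm (phiStep^[i] g)) := by
  intro i
  induction i with
  | zero =>
    intro _
    simp only [Function.iterate_zero_apply]
    refine ⟨area_NED hg, by omega, by trivial, ?_⟩
    intro hpos
    rcases NED_form hg with h | h
    · rw [bounce_allD h] at hpos; omega
    · exact h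
  | succ i ih =>
    intro hi
    have hi' : i ≤ bounce g := by omega
    obtain ⟨ha, hb, hf, hform⟩ := ih hi'
    have hbp : 0 < bounce g - i := by omega
    have hInF : InForm (phiStep^[i] g) := hform hbp
    have hbpos : 0 < bounce (phiStep^[i] g) := by rw [hb]; exact hbp
    obtain ⟨q1, q2, q3, q4⟩ := main_step hInF hbpos
    rw [Function.iterate_succ_apply']
    refine ⟨by rw [q2, ha], by omega, by rw [q4, hf], fun _ => q1⟩

/-! #### recovering the starting path -/

def buildNED : List Step → List Step
  | [] => []
  | N :: t => N :: E :: buildNED t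
  | E :: t => buildNED t
  | D :: t => D :: buildNED t

lemma buildNED_filter {g : List Step} (hg : IsNED g) :
    buildNED (g.filter (fun s => s ≠ E)) = g := by
  induction hg with
  | nil => rfl
  | ne _ ih => simpa [buildNED] using ih
  | d _ ih => simpa [buildNED] using ih
end Stmt7Aux

/-- There is a bijection `Ω_n` of `φ({NE,D}^n) = ⋃_{γ ∈ {NE,D}^n} φ(γ)`
onto itself with `area(γ) = bounce(Ω_n(γ))` and `bounce(γ) = area(Ω_n(γ))`. -/
theorem stmt7 (n : ℕ) :
    ∃ Ω : List Step → List Step,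
      Set.BijOn Ω (phiUniv n) (phiUniv n) ∧
      ∀ p ∈ phiUniv n, area p = bounce (Ω p) ∧ bounce p = area (Ω p) := by
  classical
  set Ω : List Step → List Step :=
    fun p => phiStep^[bounce p] (buildNED (p.filter (fun s => s ≠ E))) with hΩ
  have key : ∀ p ∈ phiUniv n, Ω p ∈ phiUniv n ∧ area p = bounce (Ω p) ∧
      bounce p = area (Ω p) ∧ Ω (Ω p) = p := by
    rintro p ⟨g, hg, hcnt, hmem⟩
    obtain ⟨i, hi, rfl⟩ : ∃ i, i < bounce g + 1 ∧ phiStep^[i] g = p := by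
      simp only [phiSeq, List.mem_map, List.mem_range] at hmem
      obtain ⟨i, h1, h2⟩ := hmem
      exact ⟨i, h1, h2⟩
    have hi' : i ≤ bounce g := by omega
    obtain ⟨ha, hb, hf, _⟩ := chain_facts hg i hi'
    obtain ⟨ha2, hb2, hf2, _⟩ := chain_facts hg (bounce g - i) (by omega)
    have hΩp : Ω (phiStep^[i] g) = phiStep^[bounce g - i] g := by
      simp only [hΩ]
      rw [hb, hf, buildNED_filter hg]
    refine ⟨?_, ?_, ?_, ?_⟩
    · rw [hΩp]
      refine ⟨g, hg, hcnt, ?_⟩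
      simp only [phiSeq, List.mem_map, List.mem_range]
      exact ⟨bounce g - i, by omega, rfl⟩
    · rw [hΩp, ha, hb2]; omega
    · rw [hΩp, hb, ha2]
    · rw [hΩp]
      have h2 : Ω (phiStep^[bounce g - i] g) = phiStep^[bounce g - (bounce g - i)] g := by
        simp only [hΩ]
        rw [hb2, hf2, buildNED_filter hg]
      rw [h2]
      congr 1
      omega
  refine ⟨Ω, ?_, fun p hp => ⟨(key p hp).2.1, (key p hp).2.2.1⟩⟩
  have hmaps : Set.MapsTo Ω (phiUniv n) (phiUniv n) := fun p hp => (key p hp).1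
  have hinv : Set.InvOn Ω Ω (phiUniv n) (phiUniv n) :=
    ⟨fun p hp => (key p hp).2.2.2, fun p hp => (key p hp).2.2.2⟩
  exact hinv.bijOn hmaps hmaps
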